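/- Let m be a positive integer and n a positive even integer. Then any domino tiling of the m×n rectangle R_{m,n} can be transformed into the totally vertical tiling by a finite sequence of flips. -/

import Mathlib

open Finset

attribute [local instance] Classical.propDecidable

/-- A domino `{(i,j),(i+1,j)}` is horizontal. -/
def Horiz (d : Finset (ℤ × ℤ)) : Prop := ∃ i j : ℤ, d = {(i, j), (i + 1, j)}

/-- A domino `{(i,j),(i,j+1)}` is vertical. -/
def Vert (d : Finset (ℤ × ℤ)) : Prop := ∃ i j : ℤ, d = {(i, j), (i, j + 1)}

/-- `D` is a domino tiling of the board `X`. -/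
def IsTiling (X : Finset (ℤ × ℤ)) (D : Finset (Finset (ℤ × ℤ))) : Prop :=
  (∀ d ∈ D, Horiz d ∨ Vert d) ∧ (∀ d ∈ D, d ⊆ X) ∧ ∀ p ∈ X, ∃! d, d ∈ D ∧ p ∈ d

/-- The finite set of all domino tilings of a board `X`. -/
noncomputable def tilings (X : Finset (ℤ × ℤ)) : Finset (Finset (Finset (ℤ × ℤ))) :=
  X.powerset.powerset.filter (IsTiling X)

/-- The number of horizontal dominoes in a tiling. -/
noncomputable def hcount (D : Finset (Finset (ℤ × ℤ))) : ℕ := (D.filter Horiz).card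

/-- `S(X) = ∑_{D ∈ D(X)} i^{h(D)}`. -/
noncomputable def Scomp (X : Finset (ℤ × ℤ)) : ℂ :=
  ∑ D ∈ tilings X, Complex.I ^ hcount D

/-- The rectangle `[1,a] × [1,b]` in `ℤ × ℤ`. -/
noncomputable def rect (a b : ℤ) : Finset (ℤ × ℤ) := Finset.Icc 1 a ×ˢ Finset.Icc 1 b

/-- `D'` is obtained from `D` by a single flip of a 2×2 square. -/
def Flip (D D' : Finset (Finset (ℤ × ℤ))) : Prop :=
  ∃ i j : ℤ,
    (({(i, j), (i + 1, j)} ∈ D ∧ {(i, j + 1), (i + 1, j + 1)} ∈ D ∧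
        D' = insert {(i, j), (i, j + 1)} (insert {(i + 1, j), (i + 1, j + 1)}
          ((D.erase {(i, j), (i + 1, j)}).erase {(i, j + 1), (i + 1, j + 1)}))) ∨
      ({(i, j), (i, j + 1)} ∈ D ∧ {(i + 1, j), (i + 1, j + 1)} ∈ D ∧
        D' = insert {(i, j), (i + 1, j)} (insert {(i, j + 1), (i + 1, j + 1)}
          ((D.erase {(i, j), (i, j + 1)}).erase {(i + 1, j), (i + 1, j + 1)}))))

namespace DominoAux

lemma mem_rect {a b : ℤ} {p : ℤ × ℤ} :
    p ∈ rect a b ↔ 1 ≤ p.1 ∧ p.1 ≤ a ∧ 1 ≤ p.2 ∧ p.2 ≤ b := by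
  simp [rect, Finset.mem_Icc, and_assoc]

lemma vv_eq {i j k l : ℤ} :
    ({(i,j),(i,j+1)} : Finset (ℤ×ℤ)) = {(k,l),(k,l+1)} ↔ i = k ∧ j = l := by
  constructor
  · intro h
    have h1 : ((i,j) : ℤ×ℤ) ∈ ({(k,l),(k,l+1)} : Finset (ℤ×ℤ)) := h ▸ (by simp)
    have h2 : ((i,j+1) : ℤ×ℤ) ∈ ({(k,l),(k,l+1)} : Finset (ℤ×ℤ)) := h ▸ (by simp)
    simp only [Finset.mem_insert, Finset.mem_singleton, Prod.mk.injEq] at h1 h2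
    omega
  · rintro ⟨rfl, rfl⟩; rfl

lemma hh_eq {i j k l : ℤ} :
    ({(i,j),(i+1,j)} : Finset (ℤ×ℤ)) = {(k,l),(k+1,l)} ↔ i = k ∧ j = l := by
  constructor
  · intro h
    have h1 : ((i,j) : ℤ×ℤ) ∈ ({(k,l),(k+1,l)} : Finset (ℤ×ℤ)) := h ▸ (by simp)
    have h2 : ((i+1,j) : ℤ×ℤ) ∈ ({(k,l),(k+1,l)} : Finset (ℤ×ℤ)) := h ▸ (by simp)
    simp only [Finset.mem_insert, Finset.mem_singleton, Prod.mk.injEq] at h1 h2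
    omega
  · rintro ⟨rfl, rfl⟩; rfl

lemma vh_ne {i j k l : ℤ} :
    ({(i,j),(i,j+1)} : Finset (ℤ×ℤ)) ≠ {(k,l),(k+1,l)} := by
  intro h
  have h1 : ((i,j) : ℤ×ℤ) ∈ ({(k,l),(k+1,l)} : Finset (ℤ×ℤ)) := h ▸ (by simp)
  have h2 : ((i,j+1) : ℤ×ℤ) ∈ ({(k,l),(k+1,l)} : Finset (ℤ×ℤ)) := h ▸ (by simp)
  simp only [Finset.mem_insert, Finset.mem_singleton, Prod.mk.injEq] at h1 h2
  omega

lemma cell_bounds {m n : ℕ} {D : Finset (Finset (ℤ×ℤ))} {d : Finset (ℤ×ℤ)} {p : ℤ×ℤ}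
    (hD : IsTiling (rect (m:ℤ) (n:ℤ)) D) (hd : d ∈ D) (hp : p ∈ d) :
    1 ≤ p.1 ∧ p.1 ≤ (m:ℤ) ∧ 1 ≤ p.2 ∧ p.2 ≤ (n:ℤ) := by
  have := hD.2.1 d hd hp
  rwa [mem_rect] at this

lemma cover_unique {X : Finset (ℤ×ℤ)} {D : Finset (Finset (ℤ×ℤ))} {d1 d2 : Finset (ℤ×ℤ)} {p : ℤ×ℤ}
    (hD : IsTiling X D) (h1 : d1 ∈ D) (h2 : d2 ∈ D) (hp1 : p ∈ d1) (hp2 : p ∈ d2) :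
    d1 = d2 := by
  obtain ⟨d, _, hu⟩ := hD.2.2 p (hD.2.1 d1 h1 hp1)
  rw [hu d1 ⟨h1, hp1⟩, hu d2 ⟨h2, hp2⟩]

lemma mem_swap {a b c e d : Finset (ℤ×ℤ)} {D : Finset (Finset (ℤ×ℤ))} :
    d ∈ insert a (insert b ((D.erase c).erase e)) ↔
      d = a ∨ d = b ∨ (d ∈ D ∧ d ≠ c ∧ d ≠ e) := by
  simp only [Finset.mem_insert, Finset.mem_erase]
  tauto

lemma swap_tiling {X : Finset (ℤ×ℤ)} {D : Finset (Finset (ℤ×ℤ))} {p1 p2 q1 q2 : Finset (ℤ×ℤ)}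
    (hD : IsTiling X D) (hp1 : p1 ∈ D) (hp2 : p2 ∈ D)
    (hq1 : Horiz q1 ∨ Vert q1) (hq2 : Horiz q2 ∨ Vert q2)
    (hun : q1 ∪ q2 = p1 ∪ p2) (hdq : Disjoint q1 q2) :
    IsTiling X (insert q1 (insert q2 ((D.erase p1).erase p2))) := by
  have hsubX : p1 ∪ p2 ⊆ X := by
    intro p hp
    rcases Finset.mem_union.1 hp with h | h
    exacts [hD.2.1 p1 hp1 h, hD.2.1 p2 hp2 h]
  refine ⟨?_, ?_, ?_⟩
  · intro d hd
    rcases mem_swap.1 hd with rfl | rfl | ⟨hdD, _, _⟩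
    exacts [hq1, hq2, hD.1 d hdD]
  · intro d hd
    rcases mem_swap.1 hd with rfl | rfl | ⟨hdD, _, _⟩
    · exact fun p hp => hsubX (hun ▸ Finset.mem_union_left _ hp)
    · exact fun p hp => hsubX (hun ▸ Finset.mem_union_right _ hp)
    · exact hD.2.1 d hdD
  · intro p hp
    by_cases hp12 : p ∈ p1 ∪ p2
    · have hpq : p ∈ q1 ∪ q2 := by rw [hun]; exact hp12
      rcases Finset.mem_union.1 hpq with hq | hq
      · refine ⟨q1, ⟨mem_swap.2 (Or.inl rfl), hq⟩, ?_⟩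
        rintro d ⟨hd, hpd⟩
        rcases mem_swap.1 hd with rfl | rfl | ⟨hdD, hne1, hne2⟩
        · rfl
        · exact absurd hq (Finset.disjoint_right.1 hdq hpd)
        · rcases Finset.mem_union.1 hp12 with h | h
          · exact absurd (cover_unique hD hdD hp1 hpd h) hne1
          · exact absurd (cover_unique hD hdD hp2 hpd h) hne2
      · refine ⟨q2, ⟨mem_swap.2 (Or.inr (Or.inl rfl)), hq⟩, ?_⟩
        rintro d ⟨hd, hpd⟩
        rcases mem_swap.1 hd with rfl | rfl | ⟨hdD, hne1, hne2⟩
        · exact absurd hq (Finset.disjoint_left.1 hdq hpd)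
        · rfl
        · rcases Finset.mem_union.1 hp12 with h | h
          · exact absurd (cover_unique hD hdD hp1 hpd h) hne1
          · exact absurd (cover_unique hD hdD hp2 hpd h) hne2
    · obtain ⟨d, ⟨hdD, hpd⟩, hu⟩ := hD.2.2 p hp
      have hd1 : d ≠ p1 := fun h => hp12 (Finset.mem_union_left _ (h ▸ hpd))
      have hd2 : d ≠ p2 := fun h => hp12 (Finset.mem_union_right _ (h ▸ hpd))
      refine ⟨d, ⟨mem_swap.2 (Or.inr (Or.inr ⟨hdD, hd1, hd2⟩)), hpd⟩, ?_⟩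
      rintro d' ⟨hd', hpd'⟩
      rcases mem_swap.1 hd' with rfl | rfl | ⟨hdD', _, _⟩
      · exact absurd (hun ▸ Finset.mem_union_left q2 hpd' : p ∈ p1 ∪ p2) hp12
      · exact absurd (hun ▸ Finset.mem_union_right q1 hpd' : p ∈ p1 ∪ p2) hp12
      · exact hu d' ⟨hdD', hpd'⟩

lemma flip_tiling {X : Finset (ℤ×ℤ)} {D D' : Finset (Finset (ℤ×ℤ))}
    (hD : IsTiling X D) (hF : Flip D D') : IsTiling X D' := by
  obtain ⟨i, j, hc⟩ := hF
  rcases hc with ⟨h1, h2, rfl⟩ | ⟨h1, h2, rfl⟩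
  · refine swap_tiling hD h1 h2 (Or.inr ⟨i, j, rfl⟩) (Or.inr ⟨i+1, j, rfl⟩) ?_ ?_
    · ext p
      simp only [Finset.mem_union, Finset.mem_insert, Finset.mem_singleton]
      tauto
    · rw [Finset.disjoint_left]
      intro p hp hq
      simp only [Finset.mem_insert, Finset.mem_singleton, Prod.ext_iff] at hp hq
      omega
  · refine swap_tiling hD h1 h2 (Or.inl ⟨i, j, rfl⟩) (Or.inl ⟨i, j+1, rfl⟩) ?_ ?_
    · ext p
      simp only [Finset.mem_union, Finset.mem_insert, Finset.mem_singleton]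
      tauto
    · rw [Finset.disjoint_left]
      intro p hp hq
      simp only [Finset.mem_insert, Finset.mem_singleton, Prod.ext_iff] at hp hq
      omega

lemma flip_rev {X : Finset (ℤ×ℤ)} {D D' : Finset (Finset (ℤ×ℤ))}
    (hD : IsTiling X D) (hF : Flip D D') : Flip D' D := by
  obtain ⟨i, j, hc⟩ := hF
  rcases hc with ⟨h1, h2, hD'⟩ | ⟨h1, h2, hD'⟩
  · -- horizontals h1 h2 ∈ D, verticals inserted in D'
    subst hD'
    have hv1 : ({(i,j),(i,j+1)} : Finset (ℤ×ℤ)) ∉ D := fun h =>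
      vh_ne (cover_unique (p := (i,j)) hD h h1 (by simp) (by simp))
    have hv2 : ({(i+1,j),(i+1,j+1)} : Finset (ℤ×ℤ)) ∉ D := fun h =>
      vh_ne (cover_unique (p := (i+1,j)) hD h h1 (by simp) (by simp))
    have h12 : ({(i,j),(i+1,j)} : Finset (ℤ×ℤ)) ≠ {(i,j+1),(i+1,j+1)} := by
      intro h
      have := hh_eq.1 h
      omega
    have hv12 : ({(i,j),(i,j+1)} : Finset (ℤ×ℤ)) ≠ {(i+1,j),(i+1,j+1)} := by
      intro h
      have := vv_eq.1 h
      omega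
    refine ⟨i, j, Or.inr ⟨by simp, by simp, ?_⟩⟩
    have e1 : (insert ({(i,j),(i,j+1)} : Finset (ℤ×ℤ)) (insert {(i+1,j),(i+1,j+1)}
        ((D.erase {(i,j),(i+1,j)}).erase {(i,j+1),(i+1,j+1)}))).erase {(i,j),(i,j+1)}
        = insert {(i+1,j),(i+1,j+1)} ((D.erase {(i,j),(i+1,j)}).erase {(i,j+1),(i+1,j+1)}) := by
      apply Finset.erase_insert
      simp only [Finset.mem_insert, Finset.mem_erase]
      push_neg
      exact ⟨hv12, fun _ _ h => absurd h hv1⟩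
    rw [e1]
    have e2 : (insert ({(i+1,j),(i+1,j+1)} : Finset (ℤ×ℤ))
        ((D.erase {(i,j),(i+1,j)}).erase {(i,j+1),(i+1,j+1)})).erase {(i+1,j),(i+1,j+1)}
        = (D.erase {(i,j),(i+1,j)}).erase {(i,j+1),(i+1,j+1)} := by
      apply Finset.erase_insert
      simp only [Finset.mem_erase]
      exact fun h => absurd h.2.2 hv2
    rw [e2]
    have e3 : insert ({(i,j+1),(i+1,j+1)} : Finset (ℤ×ℤ))
        ((D.erase {(i,j),(i+1,j)}).erase {(i,j+1),(i+1,j+1)}) = D.erase {(i,j),(i+1,j)} := by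
      apply Finset.insert_erase
      exact Finset.mem_erase.2 ⟨fun h => h12 h.symm, h2⟩
    rw [e3, Finset.insert_erase h1]
  · -- verticals h1 h2 ∈ D, horizontals inserted in D'
    subst hD'
    have hv1 : ({(i,j),(i+1,j)} : Finset (ℤ×ℤ)) ∉ D := fun h =>
      vh_ne (cover_unique (p := (i,j)) hD h1 h (by simp) (by simp))
    have hv2 : ({(i,j+1),(i+1,j+1)} : Finset (ℤ×ℤ)) ∉ D := fun h =>
      vh_ne (cover_unique (p := (i,j+1)) hD h1 h (by simp) (by simp))
    have h12 : ({(i,j),(i,j+1)} : Finset (ℤ×ℤ)) ≠ {(i+1,j),(i+1,j+1)} := by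
      intro h
      have := vv_eq.1 h
      omega
    have hv12 : ({(i,j),(i+1,j)} : Finset (ℤ×ℤ)) ≠ {(i,j+1),(i+1,j+1)} := by
      intro h
      have := hh_eq.1 h
      omega
    refine ⟨i, j, Or.inl ⟨by simp, by simp, ?_⟩⟩
    have e1 : (insert ({(i,j),(i+1,j)} : Finset (ℤ×ℤ)) (insert {(i,j+1),(i+1,j+1)}
        ((D.erase {(i,j),(i,j+1)}).erase {(i+1,j),(i+1,j+1)}))).erase {(i,j),(i+1,j)}
        = insert {(i,j+1),(i+1,j+1)} ((D.erase {(i,j),(i,j+1)}).erase {(i+1,j),(i+1,j+1)}) := by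
      apply Finset.erase_insert
      simp only [Finset.mem_insert, Finset.mem_erase]
      push_neg
      exact ⟨hv12, fun _ _ h => absurd h hv1⟩
    rw [e1]
    have e2 : (insert ({(i,j+1),(i+1,j+1)} : Finset (ℤ×ℤ))
        ((D.erase {(i,j),(i,j+1)}).erase {(i+1,j),(i+1,j+1)})).erase {(i,j+1),(i+1,j+1)}
        = (D.erase {(i,j),(i,j+1)}).erase {(i+1,j),(i+1,j+1)} := by
      apply Finset.erase_insert
      simp only [Finset.mem_erase]
      exact fun h => absurd h.2.2 hv2
    rw [e2]
    have e3 : insert ({(i+1,j),(i+1,j+1)} : Finset (ℤ×ℤ))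
        ((D.erase {(i,j),(i,j+1)}).erase {(i+1,j),(i+1,j+1)}) = D.erase {(i,j),(i,j+1)} := by
      apply Finset.insert_erase
      exact Finset.mem_erase.2 ⟨fun h => h12 h.symm, h2⟩
    rw [e3, Finset.insert_erase h1]



/-- cut indicator for the horizontal edge from (a,b) to (a+1,b):
it is cut iff the vertical domino {(a+1,b),(a+1,b+1)} is present. -/
def delRz (D : Finset (Finset (ℤ×ℤ))) (a b : ℤ) : ℤ :=
  if ({(a+1,b),(a+1,b+1)} : Finset (ℤ×ℤ)) ∈ D then
    (if (a+b) % 2 = 0 then -3 else 3)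
  else
    (if (a+b) % 2 = 0 then 1 else -1)

/-- cut indicator for the vertical edge from (a,b) to (a,b+1):
cut iff the horizontal domino {(a,b+1),(a+1,b+1)} is present. -/
def delUz (D : Finset (Finset (ℤ×ℤ))) (a b : ℤ) : ℤ :=
  if ({(a,b+1),(a+1,b+1)} : Finset (ℤ×ℤ)) ∈ D then
    (if (a+b) % 2 = 0 then 3 else -3)
  else
    (if (a+b) % 2 = 0 then -1 else 1)

/-- height of the vertex (x,y). -/
def ht (D : Finset (Finset (ℤ×ℤ))) (x y : ℕ) : ℤ :=
  (∑ t ∈ Finset.range y, delUz D 0 (t:ℤ)) + ∑ s ∈ Finset.range x, delRz D (s:ℤ) (y:ℤ)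

lemma delRz_mem (D : Finset (Finset (ℤ×ℤ))) (a b : ℤ) :
    delRz D a b = 1 ∨ delRz D a b = -1 ∨ delRz D a b = 3 ∨ delRz D a b = -3 := by
  unfold delRz; split_ifs <;> norm_num

lemma delUz_mem (D : Finset (Finset (ℤ×ℤ))) (a b : ℤ) :
    delUz D a b = 1 ∨ delUz D a b = -1 ∨ delUz D a b = 3 ∨ delUz D a b = -3 := by
  unfold delUz; split_ifs <;> norm_num

lemma ht_succ_x (D : Finset (Finset (ℤ×ℤ))) (x y : ℕ) :
    ht D (x+1) y = ht D x y + delRz D (x:ℤ) (y:ℤ) := by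
  simp [ht, Finset.sum_range_succ]
  ring

lemma green {m n : ℕ} {D : Finset (Finset (ℤ×ℤ))} (hD : IsTiling (rect (m:ℤ) (n:ℤ)) D)
    {a b : ℤ} (ha0 : 0 ≤ a) (hb0 : 0 ≤ b) (ha : a + 1 ≤ (m:ℤ)) (hb : b + 1 ≤ (n:ℤ)) :
    delRz D a b + delUz D (a+1) b = delUz D a b + delRz D a (b+1) := by
  have hc : ((a+1, b+1) : ℤ×ℤ) ∈ rect (m:ℤ) (n:ℤ) := by
    rw [mem_rect]; constructor <;> [omega; constructor <;> [exact ha; omega]]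
  obtain ⟨d, ⟨hdD, hdc⟩, hdu⟩ := hD.2.2 _ hc
  -- the four candidate dominoes
  set Q1 : Finset (ℤ×ℤ) := {(a+1,b),(a+1,b+1)} with hQ1
  set Q2 : Finset (ℤ×ℤ) := {(a+1,b+1),(a+1,b+1+1)} with hQ2
  set Q3 : Finset (ℤ×ℤ) := {(a,b+1),(a+1,b+1)} with hQ3
  set Q4 : Finset (ℤ×ℤ) := {(a+1,b+1),(a+1+1,b+1)} with hQ4
  have hd4 : d = Q1 ∨ d = Q2 ∨ d = Q3 ∨ d = Q4 := by
    rcases hD.1 d hdD with ⟨i, j, rfl⟩ | ⟨i, j, rfl⟩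
    · simp only [Finset.mem_insert, Finset.mem_singleton, Prod.mk.injEq] at hdc
      rcases hdc with ⟨h1, h2⟩ | ⟨h1, h2⟩
      · right; right; right
        rw [hQ4]
        subst h1 h2
        rfl
      · right; right; left
        rw [hQ3]
        have hi : i = a := by omega
        subst hi h2
        rfl
    · simp only [Finset.mem_insert, Finset.mem_singleton, Prod.mk.injEq] at hdc
      rcases hdc with ⟨h1, h2⟩ | ⟨h1, h2⟩
      · right; left
        rw [hQ2]
        subst h1 h2
        rfl
      · left
        rw [hQ1]
        have hj : j = b := by omega
        subst h1 hj
        rfl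
  have honly : ∀ Q : Finset (ℤ×ℤ), ((a+1,b+1) : ℤ×ℤ) ∈ Q → Q ∈ D → Q = d := by
    intro Q hQm hQD
    exact hdu Q ⟨hQD, hQm⟩
  have hne12 : Q1 ≠ Q2 := by rw [hQ1, hQ2]; intro h; have := vv_eq.1 h; omega
  have hne13 : Q1 ≠ Q3 := by rw [hQ1, hQ3]; exact vh_ne
  have hne14 : Q1 ≠ Q4 := by rw [hQ1, hQ4]; exact vh_ne
  have hne23 : Q2 ≠ Q3 := by rw [hQ2, hQ3]; exact vh_ne
  have hne24 : Q2 ≠ Q4 := by rw [hQ2, hQ4]; exact vh_ne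
  have hne34 : Q3 ≠ Q4 := by rw [hQ3, hQ4]; intro h; have := hh_eq.1 h; omega
  have key : delRz D a b + delUz D (a+1) b = delUz D a b + delRz D a (b+1) := by
    unfold delRz delUz
    rcases hd4 with rfl | rfl | rfl | rfl
    · rw [if_pos hdD, if_neg (fun h => hne12 (((honly _ (by rw [hQ2]; simp) h)).symm)),
        if_neg (fun h => hne13 ((honly _ (by rw [hQ3]; simp) h).symm)),
        if_neg (fun h => hne14 ((honly _ (by rw [hQ4]; simp) h).symm))]
      split_ifs <;> omega
    · rw [if_pos hdD, if_neg (fun h => hne12 (honly _ (by rw [hQ1]; simp) h)),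
        if_neg (fun h => hne23 ((honly _ (by rw [hQ3]; simp) h).symm)),
        if_neg (fun h => hne24 ((honly _ (by rw [hQ4]; simp) h).symm))]
      split_ifs <;> omega
    · rw [if_pos hdD, if_neg (fun h => hne13 (honly _ (by rw [hQ1]; simp) h)),
        if_neg (fun h => hne23 (honly _ (by rw [hQ2]; simp) h)),
        if_neg (fun h => hne34 ((honly _ (by rw [hQ4]; simp) h).symm))]
      split_ifs <;> omega
    · rw [if_pos hdD, if_neg (fun h => hne14 (honly _ (by rw [hQ1]; simp) h)),
        if_neg (fun h => hne24 (honly _ (by rw [hQ2]; simp) h)),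
        if_neg (fun h => hne34 (honly _ (by rw [hQ3]; simp) h))]
      split_ifs <;> omega
  exact key

lemma up_diff {m n : ℕ} {D : Finset (Finset (ℤ×ℤ))} (hD : IsTiling (rect (m:ℤ) (n:ℤ)) D)
    {x y : ℕ} (hx : x ≤ m) (hy : y + 1 ≤ n) :
    ht D x (y+1) = ht D x y + delUz D (x:ℤ) (y:ℤ) := by
  induction x with
  | zero =>
    simp [ht, Finset.sum_range_succ]
  | succ x ih =>
    have hx' : x ≤ m := by omega
    have e1 : ht D (x+1) (y+1) = ht D x (y+1) + delRz D (x:ℤ) ((y:ℤ)+1) := by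
      have := ht_succ_x D x (y+1)
      rwa [show (((y:ℕ)+1 : ℕ) : ℤ) = (y:ℤ)+1 by push_cast; ring] at this
    have e2 := ht_succ_x D x y
    have e3 := ih hx'
    have e4 : delRz D (x:ℤ) (y:ℤ) + delUz D ((x:ℤ)+1) (y:ℤ)
        = delUz D (x:ℤ) (y:ℤ) + delRz D (x:ℤ) ((y:ℤ)+1) :=
      green hD (by positivity) (by positivity) (by push_cast; omega) (by push_cast; omega)
    have e5 : (((x:ℕ)+1 : ℕ) : ℤ) = (x:ℤ)+1 := by push_cast; ring
    rw [e1, e3, e2, e5]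
    omega


lemma dvd4 (D E : Finset (Finset (ℤ×ℤ))) (x y : ℕ) :
    (4:ℤ) ∣ ht D x y - ht E x y := by
  have hR : ∀ a b : ℤ, (4:ℤ) ∣ delRz D a b - delRz E a b := by
    intro a b; unfold delRz; split_ifs <;> omega
  have hU : ∀ a b : ℤ, (4:ℤ) ∣ delUz D a b - delUz E a b := by
    intro a b; unfold delUz; split_ifs <;> omega
  have e : ht D x y - ht E x y =
      (∑ t ∈ Finset.range y, (delUz D 0 (t:ℤ) - delUz E 0 (t:ℤ)))
      + ∑ s ∈ Finset.range x, (delRz D (s:ℤ) (y:ℤ) - delRz E (s:ℤ) (y:ℤ)) := by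
    simp [ht, Finset.sum_sub_distrib]
    ring
  rw [e]
  exact dvd_add (Finset.dvd_sum (fun t _ => hU 0 t)) (Finset.dvd_sum (fun s _ => hR s y))

lemma cell_ok {m n : ℕ} {D : Finset (Finset (ℤ×ℤ))} (hD : IsTiling (rect (m:ℤ) (n:ℤ)) D)
    {F : Finset (ℤ×ℤ)} {p : ℤ×ℤ} (hp : p ∈ F)
    (hbad : p.1 < 1 ∨ (m:ℤ) < p.1 ∨ p.2 < 1 ∨ (n:ℤ) < p.2) : F ∉ D := by
  intro hF
  have := cell_bounds hD hF hp
  omega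

lemma ht_bot {m n : ℕ} {D E : Finset (Finset (ℤ×ℤ))}
    (hD : IsTiling (rect (m:ℤ) (n:ℤ)) D) (hE : IsTiling (rect (m:ℤ) (n:ℤ)) E)
    (x : ℕ) : ht D x 0 = ht E x 0 := by
  unfold ht
  congr 1
  apply Finset.sum_congr rfl
  intro s _
  unfold delRz
  rw [if_neg (cell_ok hD (p := ((s:ℤ)+1, (0:ℕ))) (by simp) (by norm_num)),
    if_neg (cell_ok hE (p := ((s:ℤ)+1, (0:ℕ))) (by simp) (by norm_num))]

lemma ht_left {m n : ℕ} {D E : Finset (Finset (ℤ×ℤ))}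
    (hD : IsTiling (rect (m:ℤ) (n:ℤ)) D) (hE : IsTiling (rect (m:ℤ) (n:ℤ)) E)
    (y : ℕ) : ht D 0 y = ht E 0 y := by
  unfold ht
  simp only [Finset.range_zero, Finset.sum_empty, add_zero]
  apply Finset.sum_congr rfl
  intro t _
  unfold delUz
  rw [if_neg (cell_ok hD (p := ((0:ℤ), (t:ℤ)+1)) (by simp) (by norm_num)),
    if_neg (cell_ok hE (p := ((0:ℤ), (t:ℤ)+1)) (by simp) (by norm_num))]

lemma ht_top {m n : ℕ} {D E : Finset (Finset (ℤ×ℤ))}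
    (hD : IsTiling (rect (m:ℤ) (n:ℤ)) D) (hE : IsTiling (rect (m:ℤ) (n:ℤ)) E)
    (x : ℕ) : ht D x n = ht E x n := by
  unfold ht
  congr 1
  · apply Finset.sum_congr rfl
    intro t ht
    unfold delUz
    rw [if_neg (cell_ok hD (p := ((0:ℤ), (t:ℤ)+1)) (by simp) (by norm_num)),
      if_neg (cell_ok hE (p := ((0:ℤ), (t:ℤ)+1)) (by simp) (by norm_num))]
  · apply Finset.sum_congr rfl
    intro s _
    unfold delRz
    rw [if_neg (cell_ok hD (p := ((s:ℤ)+1, (n:ℤ)+1)) (by simp) (by omega)),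
      if_neg (cell_ok hE (p := ((s:ℤ)+1, (n:ℤ)+1)) (by simp) (by omega))]

lemma ht_right {m n : ℕ} {D E : Finset (Finset (ℤ×ℤ))}
    (hD : IsTiling (rect (m:ℤ) (n:ℤ)) D) (hE : IsTiling (rect (m:ℤ) (n:ℤ)) E)
    {y : ℕ} (hy : y ≤ n) : ht D m y = ht E m y := by
  induction y with
  | zero => exact ht_bot hD hE m
  | succ y ih =>
    have hy' : y + 1 ≤ n := hy
    rw [up_diff hD le_rfl hy', up_diff hE le_rfl hy', ih (by omega)]
    congr 1
    unfold delUz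
    rw [if_neg (cell_ok hD (p := ((m:ℤ)+1, (y:ℤ)+1)) (by simp) (by omega)),
      if_neg (cell_ok hE (p := ((m:ℤ)+1, (y:ℤ)+1)) (by simp) (by omega))]

lemma heights_det {m n : ℕ} {D E : Finset (Finset (ℤ×ℤ))}
    (hD : IsTiling (rect (m:ℤ) (n:ℤ)) D) (hE : IsTiling (rect (m:ℤ) (n:ℤ)) E)
    (h : ∀ x y : ℕ, x ≤ m → y ≤ n → ht D x y = ht E x y) : D = E := by
  have main : ∀ D' E' : Finset (Finset (ℤ×ℤ)), IsTiling (rect (m:ℤ) (n:ℤ)) D' →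
      IsTiling (rect (m:ℤ) (n:ℤ)) E' →
      (∀ x y : ℕ, x ≤ m → y ≤ n → ht D' x y = ht E' x y) → D' ⊆ E' := by
    intro D' E' hD' hE' hh d hd
    rcases hD'.1 d hd with ⟨i, j, hdef⟩ | ⟨i, j, hdef⟩
    · -- horizontal: detected by delUz at (i, j-1)
      have hb1 := cell_bounds hD' hd (hdef ▸ (show ((i,j):ℤ×ℤ) ∈ ({(i,j),(i+1,j)}:Finset (ℤ×ℤ)) by simp))
      have hb2 := cell_bounds hD' hd (hdef ▸ (show ((i+1,j):ℤ×ℤ) ∈ ({(i,j),(i+1,j)}:Finset (ℤ×ℤ)) by simp))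
      simp only at hb1 hb2
      set X0 : ℕ := i.toNat with hX0
      set T0 : ℕ := (j-1).toNat with hT0
      have hc1 : (X0:ℤ) = i := by omega
      have hc2 : (T0:ℤ) = j - 1 := by omega
      have hq : ({((X0:ℤ),(T0:ℤ)+1),((X0:ℤ)+1,(T0:ℤ)+1)} : Finset (ℤ×ℤ)) = d := by
        rw [hdef, hc1, hc2]
        norm_num
      have hX0m : X0 ≤ m := by omega
      have hT0n : T0 + 1 ≤ n := by omega
      have hdel : delUz D' (X0:ℤ) (T0:ℤ) = delUz E' (X0:ℤ) (T0:ℤ) := by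
        have e1 := up_diff hD' hX0m hT0n
        have e2 := up_diff hE' hX0m hT0n
        have e3 := hh X0 T0 hX0m (by omega)
        have e4 := hh X0 (T0+1) hX0m hT0n
        omega
      have hcut : ({((X0:ℤ),(T0:ℤ)+1),((X0:ℤ)+1,(T0:ℤ)+1)} : Finset (ℤ×ℤ)) ∈ D' := hq ▸ hd
      by_contra hnotE
      have hnotE' : ({((X0:ℤ),(T0:ℤ)+1),((X0:ℤ)+1,(T0:ℤ)+1)} : Finset (ℤ×ℤ)) ∉ E' := by
        rw [hq]; exact hnotE
      unfold delUz at hdel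
      rw [if_pos hcut, if_neg hnotE'] at hdel
      split_ifs at hdel <;> omega
    · -- vertical: detected by delRz at (i-1, j)
      have hb1 := cell_bounds hD' hd (hdef ▸ (show ((i,j):ℤ×ℤ) ∈ ({(i,j),(i,j+1)}:Finset (ℤ×ℤ)) by simp))
      have hb2 := cell_bounds hD' hd (hdef ▸ (show ((i,j+1):ℤ×ℤ) ∈ ({(i,j),(i,j+1)}:Finset (ℤ×ℤ)) by simp))
      simp only at hb1 hb2
      set S0 : ℕ := (i-1).toNat with hS0
      set Y0 : ℕ := j.toNat with hY0
      have hc1 : (S0:ℤ) = i - 1 := by omega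
      have hc2 : (Y0:ℤ) = j := by omega
      have hq : ({((S0:ℤ)+1,(Y0:ℤ)),((S0:ℤ)+1,(Y0:ℤ)+1)} : Finset (ℤ×ℤ)) = d := by
        rw [hdef, hc1, hc2]
        norm_num
      have hS0m : S0 + 1 ≤ m := by omega
      have hY0n : Y0 ≤ n := by omega
      have hdel : delRz D' (S0:ℤ) (Y0:ℤ) = delRz E' (S0:ℤ) (Y0:ℤ) := by
        have e1 := ht_succ_x D' S0 Y0
        have e2 := ht_succ_x E' S0 Y0
        have e3 := hh S0 Y0 (by omega) hY0n
        have e4 := hh (S0+1) Y0 hS0m hY0n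
        omega
      have hcut : ({((S0:ℤ)+1,(Y0:ℤ)),((S0:ℤ)+1,(Y0:ℤ)+1)} : Finset (ℤ×ℤ)) ∈ D' := hq ▸ hd
      by_contra hnotE
      have hnotE' : ({((S0:ℤ)+1,(Y0:ℤ)),((S0:ℤ)+1,(Y0:ℤ)+1)} : Finset (ℤ×ℤ)) ∉ E' := by
        rw [hq]; exact hnotE
      unfold delRz at hdel
      rw [if_pos hcut, if_neg hnotE'] at hdel
      split_ifs at hdel <;> omega
  exact Finset.Subset.antisymm (main D E hD hE h) (main E D hE hD (fun x y hx hy => (h x y hx hy).symm))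

lemma ht_flip {D D' : Finset (Finset (ℤ×ℤ))} {x y : ℕ} (hx1 : 1 ≤ x)
    (hALL : ∀ s y' : ℕ, ¬(s = x - 1 ∧ y' = y) → ¬(s = x ∧ y' = y) →
      delRz D' (s:ℤ) (y':ℤ) = delRz D (s:ℤ) (y':ℤ))
    (hA : delRz D' ((x:ℤ)-1) (y:ℤ) = delRz D ((x:ℤ)-1) (y:ℤ) - 4)
    (hB : delRz D' (x:ℤ) (y:ℤ) = delRz D (x:ℤ) (y:ℤ) + 4)
    (hU : ∀ t : ℕ, delUz D' 0 (t:ℤ) = delUz D 0 (t:ℤ)) :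
    ∀ x' y' : ℕ, ht D' x' y' = ht D x' y' - (if x' = x ∧ y' = y then 4 else 0) := by
  intro x' y'
  unfold ht
  rw [Finset.sum_congr rfl (fun t _ => hU t)]
  by_cases hyy : y' = y
  · subst hyy
    have hterm : ∀ s : ℕ, delRz D' (s:ℤ) (y':ℤ) = delRz D (s:ℤ) (y':ℤ)
        + ((if s = x-1 then (-4:ℤ) else 0) + (if s = x then (4:ℤ) else 0)) := by
      intro s
      by_cases h1 : s = x - 1
      · subst h1
        have hc : ((x-1 : ℕ) : ℤ) = (x:ℤ) - 1 := by omega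
        rw [hc, hA, if_pos rfl, if_neg (by omega)]
        ring
      · by_cases h2 : s = x
        · subst h2
          rw [hB, if_neg h1, if_pos rfl]
          ring
        · rw [hALL s y' (by tauto) (by tauto), if_neg h1, if_neg h2]
          ring
    rw [Finset.sum_congr rfl (fun s _ => hterm s), Finset.sum_add_distrib,
      Finset.sum_add_distrib, Finset.sum_ite_eq' (Finset.range x') (x-1) (fun _ => (-4:ℤ)),
      Finset.sum_ite_eq' (Finset.range x') x (fun _ => (4:ℤ))]
    simp only [Finset.mem_range, and_true]
    split_ifs <;> omega
  · rw [Finset.sum_congr rfl (fun s _ => hALL s y' (by tauto) (by tauto)),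
      if_neg (by tauto)]
    ring

lemma flipdown {m n : ℕ} {D : Finset (Finset (ℤ×ℤ))} (hD : IsTiling (rect (m:ℤ) (n:ℤ)) D)
    {x y : ℕ} (hx1 : 1 ≤ x) (hx2 : x + 1 ≤ m) (hy1 : 1 ≤ y) (hy2 : y + 1 ≤ n)
    (hR : delRz D (x:ℤ) (y:ℤ) < 0) (hL : 0 < delRz D ((x:ℤ)-1) (y:ℤ))
    (hU : delUz D (x:ℤ) (y:ℤ) < 0) (hDn : 0 < delUz D (x:ℤ) ((y:ℤ)-1)) :
    ∃ D', Flip D D' ∧ IsTiling (rect (m:ℤ) (n:ℤ)) D' ∧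
      ∀ x' y' : ℕ, ht D' x' y' = ht D x' y' - (if x' = x ∧ y' = y then 4 else 0) := by
  have ecx : (x:ℤ) - 1 + 1 = (x:ℤ) := by ring
  have ecy : (y:ℤ) - 1 + 1 = (y:ℤ) := by ring
  unfold delRz at hR hL
  unfold delUz at hU hDn
  rw [ecx] at hL
  rw [ecy] at hDn
  rcases (by omega : ((x:ℤ)+(y:ℤ)) % 2 = 0 ∨ ((x:ℤ)+(y:ℤ)) % 2 = 1) with hp | hp
  · -- two vertical dominoes present; flip them to horizontals
    have hpA : ¬(((x:ℤ)-1+(y:ℤ)) % 2 = 0) := by omega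
    have hcA : ({((x:ℤ),(y:ℤ)),((x:ℤ),(y:ℤ)+1)} : Finset (ℤ×ℤ)) ∈ D := by
      by_contra hc
      rw [if_neg hc, if_neg hpA] at hL
      omega
    have hcB : ({((x:ℤ)+1,(y:ℤ)),((x:ℤ)+1,(y:ℤ)+1)} : Finset (ℤ×ℤ)) ∈ D := by
      by_contra hc
      rw [if_neg hc, if_pos hp] at hR
      omega
    have hFlip : Flip D (insert {((x:ℤ),(y:ℤ)),((x:ℤ)+1,(y:ℤ))}
        (insert {((x:ℤ),(y:ℤ)+1),((x:ℤ)+1,(y:ℤ)+1)}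
          ((D.erase {((x:ℤ),(y:ℤ)),((x:ℤ),(y:ℤ)+1)}).erase
            {((x:ℤ)+1,(y:ℤ)),((x:ℤ)+1,(y:ℤ)+1)}))) :=
      ⟨(x:ℤ), (y:ℤ), Or.inr ⟨hcA, hcB, rfl⟩⟩
    have hTil := flip_tiling hD hFlip
    refine ⟨_, hFlip, hTil, ht_flip hx1 ?_ ?_ ?_ ?_⟩
    · intro s y' h1 h2
      have hiff : (({((s:ℤ)+1,(y':ℤ)),((s:ℤ)+1,(y':ℤ)+1)} : Finset (ℤ×ℤ)) ∈
          insert {((x:ℤ),(y:ℤ)),((x:ℤ)+1,(y:ℤ))}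
          (insert {((x:ℤ),(y:ℤ)+1),((x:ℤ)+1,(y:ℤ)+1)}
            ((D.erase {((x:ℤ),(y:ℤ)),((x:ℤ),(y:ℤ)+1)}).erase
              {((x:ℤ)+1,(y:ℤ)),((x:ℤ)+1,(y:ℤ)+1)}))) =
          (({((s:ℤ)+1,(y':ℤ)),((s:ℤ)+1,(y':ℤ)+1)} : Finset (ℤ×ℤ)) ∈ D) := by
        apply propext
        rw [mem_swap]
        constructor
        · rintro (h | h | ⟨h, _, _⟩)
          · exact absurd h vh_ne
          · exact absurd h vh_ne
          · exact h
        · intro h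
          refine Or.inr (Or.inr ⟨h, ?_, ?_⟩)
          · intro hF
            have := vv_eq.1 hF
            omega
          · intro hF
            have := vv_eq.1 hF
            omega
      unfold delRz
      simp only [hiff]
    · have hnotA : ({((x:ℤ),(y:ℤ)),((x:ℤ),(y:ℤ)+1)} : Finset (ℤ×ℤ)) ∉
          insert {((x:ℤ),(y:ℤ)),((x:ℤ)+1,(y:ℤ))}
          (insert {((x:ℤ),(y:ℤ)+1),((x:ℤ)+1,(y:ℤ)+1)}
            ((D.erase {((x:ℤ),(y:ℤ)),((x:ℤ),(y:ℤ)+1)}).erase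
              {((x:ℤ)+1,(y:ℤ)),((x:ℤ)+1,(y:ℤ)+1)})) := by
        rw [mem_swap]
        rintro (h | h | ⟨_, h, _⟩)
        · exact vh_ne h
        · exact vh_ne h
        · exact h rfl
      unfold delRz
      rw [ecx, if_neg hnotA, if_pos hcA, if_neg hpA, if_neg hpA]
      norm_num
    · have hnotB : ({((x:ℤ)+1,(y:ℤ)),((x:ℤ)+1,(y:ℤ)+1)} : Finset (ℤ×ℤ)) ∉
          insert {((x:ℤ),(y:ℤ)),((x:ℤ)+1,(y:ℤ))}
          (insert {((x:ℤ),(y:ℤ)+1),((x:ℤ)+1,(y:ℤ)+1)}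
            ((D.erase {((x:ℤ),(y:ℤ)),((x:ℤ),(y:ℤ)+1)}).erase
              {((x:ℤ)+1,(y:ℤ)),((x:ℤ)+1,(y:ℤ)+1)})) := by
        rw [mem_swap]
        rintro (h | h | ⟨_, _, h⟩)
        · exact vh_ne h
        · exact vh_ne h
        · exact h rfl
      unfold delRz
      rw [if_neg hnotB, if_pos hcB, if_pos hp, if_pos hp]
      norm_num
    · intro t
      unfold delUz
      rw [if_neg (cell_ok hTil (p := ((0:ℤ), (t:ℤ)+1)) (by simp) (by norm_num)),
        if_neg (cell_ok hD (p := ((0:ℤ), (t:ℤ)+1)) (by simp) (by norm_num))]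
  · -- two horizontal dominoes present; flip them to verticals
    have hpA : (((x:ℤ)-1+(y:ℤ)) % 2 = 0) := by omega
    have hpD : (((x:ℤ)+((y:ℤ)-1)) % 2 = 0) := by omega
    have hpne : ¬(((x:ℤ)+(y:ℤ)) % 2 = 0) := by omega
    have hcBot : ({((x:ℤ),(y:ℤ)),((x:ℤ)+1,(y:ℤ))} : Finset (ℤ×ℤ)) ∈ D := by
      by_contra hc
      rw [if_neg hc, if_pos hpD] at hDn
      omega
    have hcT : ({((x:ℤ),(y:ℤ)+1),((x:ℤ)+1,(y:ℤ)+1)} : Finset (ℤ×ℤ)) ∈ D := by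
      by_contra hc
      rw [if_neg hc, if_neg hpne] at hU
      omega
    have hFlip : Flip D (insert {((x:ℤ),(y:ℤ)),((x:ℤ),(y:ℤ)+1)}
        (insert {((x:ℤ)+1,(y:ℤ)),((x:ℤ)+1,(y:ℤ)+1)}
          ((D.erase {((x:ℤ),(y:ℤ)),((x:ℤ)+1,(y:ℤ))}).erase
            {((x:ℤ),(y:ℤ)+1),((x:ℤ)+1,(y:ℤ)+1)}))) :=
      ⟨(x:ℤ), (y:ℤ), Or.inl ⟨hcBot, hcT, rfl⟩⟩
    have hTil := flip_tiling hD hFlip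
    have hnA : ({((x:ℤ),(y:ℤ)),((x:ℤ),(y:ℤ)+1)} : Finset (ℤ×ℤ)) ∉ D := by
      intro h
      exact vh_ne (cover_unique (p := ((x:ℤ),(y:ℤ))) hD h hcBot (by simp) (by simp))
    have hnB : ({((x:ℤ)+1,(y:ℤ)),((x:ℤ)+1,(y:ℤ)+1)} : Finset (ℤ×ℤ)) ∉ D := by
      intro h
      exact vh_ne (cover_unique (p := ((x:ℤ)+1,(y:ℤ))) hD h hcBot (by simp) (by simp))
    refine ⟨_, hFlip, hTil, ht_flip hx1 ?_ ?_ ?_ ?_⟩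
    · intro s y' h1 h2
      have hiff : (({((s:ℤ)+1,(y':ℤ)),((s:ℤ)+1,(y':ℤ)+1)} : Finset (ℤ×ℤ)) ∈
          insert {((x:ℤ),(y:ℤ)),((x:ℤ),(y:ℤ)+1)}
          (insert {((x:ℤ)+1,(y:ℤ)),((x:ℤ)+1,(y:ℤ)+1)}
            ((D.erase {((x:ℤ),(y:ℤ)),((x:ℤ)+1,(y:ℤ))}).erase
              {((x:ℤ),(y:ℤ)+1),((x:ℤ)+1,(y:ℤ)+1)}))) =
          (({((s:ℤ)+1,(y':ℤ)),((s:ℤ)+1,(y':ℤ)+1)} : Finset (ℤ×ℤ)) ∈ D) := by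
        apply propext
        rw [mem_swap]
        constructor
        · rintro (h | h | ⟨h, _, _⟩)
          · exfalso
            have := vv_eq.1 h
            omega
          · exfalso
            have := vv_eq.1 h
            omega
          · exact h
        · intro h
          exact Or.inr (Or.inr ⟨h, vh_ne, vh_ne⟩)
      unfold delRz
      simp only [hiff]
    · have hinA : ({((x:ℤ),(y:ℤ)),((x:ℤ),(y:ℤ)+1)} : Finset (ℤ×ℤ)) ∈
          insert {((x:ℤ),(y:ℤ)),((x:ℤ),(y:ℤ)+1)}
          (insert {((x:ℤ)+1,(y:ℤ)),((x:ℤ)+1,(y:ℤ)+1)}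
            ((D.erase {((x:ℤ),(y:ℤ)),((x:ℤ)+1,(y:ℤ))}).erase
              {((x:ℤ),(y:ℤ)+1),((x:ℤ)+1,(y:ℤ)+1)})) := Finset.mem_insert_self _ _
      unfold delRz
      rw [ecx, if_pos hinA, if_neg hnA, if_pos hpA, if_pos hpA]
      norm_num
    · have hinB : ({((x:ℤ)+1,(y:ℤ)),((x:ℤ)+1,(y:ℤ)+1)} : Finset (ℤ×ℤ)) ∈
          insert {((x:ℤ),(y:ℤ)),((x:ℤ),(y:ℤ)+1)}
          (insert {((x:ℤ)+1,(y:ℤ)),((x:ℤ)+1,(y:ℤ)+1)}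
            ((D.erase {((x:ℤ),(y:ℤ)),((x:ℤ)+1,(y:ℤ))}).erase
              {((x:ℤ),(y:ℤ)+1),((x:ℤ)+1,(y:ℤ)+1)})) :=
        Finset.mem_insert_of_mem (Finset.mem_insert_self _ _)
      unfold delRz
      rw [if_pos hinB, if_neg hnB, if_neg hpne, if_neg hpne]
      norm_num
    · intro t
      unfold delUz
      rw [if_neg (cell_ok hTil (p := ((0:ℤ), (t:ℤ)+1)) (by simp) (by norm_num)),
        if_neg (cell_ok hD (p := ((0:ℤ), (t:ℤ)+1)) (by simp) (by norm_num))]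

lemma flipstep {m n : ℕ} {D E : Finset (Finset (ℤ×ℤ))}
    (hD : IsTiling (rect (m:ℤ) (n:ℤ)) D) (hE : IsTiling (rect (m:ℤ) (n:ℤ)) E)
    {x y : ℕ} (hx : x ≤ m) (hy : y ≤ n) (hgt : ht E x y < ht D x y)
    (hmax : ∀ x' y' : ℕ, x' ≤ m → y' ≤ n → ht D x' y' ≠ ht E x' y' →
      ht D x' y' ≤ ht D x y ∧ ht E x' y' ≤ ht D x y) :
    ∃ D', Flip D D' ∧ IsTiling (rect (m:ℤ) (n:ℤ)) D' ∧
      (∀ x' y' : ℕ, ht D' x' y' = ht D x' y' - (if x' = x ∧ y' = y then 4 else 0)) ∧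
      ht E x y + 4 ≤ ht D x y := by
  have hne : ht D x y ≠ ht E x y := ne_of_gt hgt
  have hx1 : 1 ≤ x := by
    rcases Nat.eq_zero_or_pos x with rfl | h
    · exact absurd (ht_left hD hE y) hne
    · exact h
  have hxm : x ≠ m := by rintro rfl; exact hne (ht_right hD hE hy)
  have hy1 : 1 ≤ y := by
    rcases Nat.eq_zero_or_pos y with rfl | h
    · exact absurd (ht_bot hD hE x) hne
    · exact h
  have hyn : y ≠ n := by rintro rfl; exact hne (ht_top hD hE x)
  have hx2 : x + 1 ≤ m := by omega
  have hy2 : y + 1 ≤ n := by omega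
  have hdvd := dvd4 D E x y
  have hgap : ht E x y + 4 ≤ ht D x y := by omega
  have key : ∀ x' y' : ℕ, x' ≤ m → y' ≤ n → ht D x' y' ≠ ht D x y →
      ht E x' y' ≤ ht E x y + 3 → ht D x' y' < ht D x y := by
    intro x' y' h1 h2 h3 h4
    by_cases h5 : ht D x' y' = ht E x' y'
    · omega
    · exact lt_of_le_of_ne ((hmax x' y' h1 h2 h5).1) h3
  have exm1 : x - 1 + 1 = x := by omega
  have hcx : ((x-1:ℕ):ℤ) = (x:ℤ)-1 := by omega
  have eym1 : y - 1 + 1 = y := by omega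
  have hcy : ((y-1:ℕ):ℤ) = (y:ℤ)-1 := by omega
  have eR := ht_succ_x D x y
  have eRE := ht_succ_x E x y
  have eL : ht D x y = ht D (x-1) y + delRz D ((x:ℤ)-1) (y:ℤ) := by
    have h := ht_succ_x D (x-1) y
    rw [exm1, hcx] at h
    exact h
  have eLE : ht E x y = ht E (x-1) y + delRz E ((x:ℤ)-1) (y:ℤ) := by
    have h := ht_succ_x E (x-1) y
    rw [exm1, hcx] at h
    exact h
  have eU := up_diff hD hx hy2
  have eUE := up_diff hE hx hy2
  have eD : ht D x y = ht D x (y-1) + delUz D (x:ℤ) ((y:ℤ)-1) := by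
    have h := up_diff hD hx (show (y-1)+1 ≤ n by omega)
    rw [eym1, hcy] at h
    exact h
  have eDE : ht E x y = ht E x (y-1) + delUz E (x:ℤ) ((y:ℤ)-1) := by
    have h := up_diff hE hx (show (y-1)+1 ≤ n by omega)
    rw [eym1, hcy] at h
    exact h
  have hRk : delRz D (x:ℤ) (y:ℤ) < 0 := by
    have h3 : ht D (x+1) y ≠ ht D x y := by
      have := delRz_mem D (x:ℤ) (y:ℤ); omega
    have h4 : ht E (x+1) y ≤ ht E x y + 3 := by
      have := delRz_mem E (x:ℤ) (y:ℤ); omega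
    have := key (x+1) y hx2 hy h3 h4
    omega
  have hLk : 0 < delRz D ((x:ℤ)-1) (y:ℤ) := by
    have h3 : ht D (x-1) y ≠ ht D x y := by
      have := delRz_mem D ((x:ℤ)-1) (y:ℤ); omega
    have h4 : ht E (x-1) y ≤ ht E x y + 3 := by
      have := delRz_mem E ((x:ℤ)-1) (y:ℤ); omega
    have := key (x-1) y (by omega) hy h3 h4
    omega
  have hUk : delUz D (x:ℤ) (y:ℤ) < 0 := by
    have h3 : ht D x (y+1) ≠ ht D x y := by
      have := delUz_mem D (x:ℤ) (y:ℤ); omega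
    have h4 : ht E x (y+1) ≤ ht E x y + 3 := by
      have := delUz_mem E (x:ℤ) (y:ℤ); omega
    have := key x (y+1) hx hy2 h3 h4
    omega
  have hDk : 0 < delUz D (x:ℤ) ((y:ℤ)-1) := by
    have h3 : ht D x (y-1) ≠ ht D x y := by
      have := delUz_mem D (x:ℤ) ((y:ℤ)-1); omega
    have h4 : ht E x (y-1) ≤ ht E x y + 3 := by
      have := delUz_mem E (x:ℤ) ((y:ℤ)-1); omega
    have := key x (y-1) hx (by omega) h3 h4
    omega
  obtain ⟨D', hF, hT, hh⟩ := flipdown hD hx1 hx2 hy1 hy2 hRk hLk hUk hDk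
  exact ⟨D', hF, hT, hh, hgap⟩

noncomputable def mu (m n : ℕ) (D E : Finset (Finset (ℤ×ℤ))) : ℕ :=
  ∑ p ∈ Finset.range (m+1) ×ˢ Finset.range (n+1), (ht D p.1 p.2 - ht E p.1 p.2).natAbs

lemma conn {m n : ℕ} : ∀ k : ℕ, ∀ D E : Finset (Finset (ℤ×ℤ)),
    IsTiling (rect (m:ℤ) (n:ℤ)) D → IsTiling (rect (m:ℤ) (n:ℤ)) E →
    mu m n D E = k → Relation.ReflTransGen Flip D E := by
  intro k
  induction k using Nat.strong_induction_on with
  | _ k IH =>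
    intro D E hD hE hk
    by_cases hDE : D = E
    · subst hDE
      exact Relation.ReflTransGen.refl
    have hW : ∃ p : ℕ × ℕ, p ∈ (Finset.range (m+1) ×ˢ Finset.range (n+1)) ∧
        ht D p.1 p.2 ≠ ht E p.1 p.2 := by
      by_contra hcon
      push_neg at hcon
      refine hDE (heights_det hD hE ?_)
      intro x y hx hy
      exact hcon (x, y) (by simp only [Finset.mem_product, Finset.mem_range]; omega)
    obtain ⟨p0, hp0g, hp0ne⟩ := hW
    obtain ⟨u, huW, hmaxW⟩ := Finset.exists_max_image
      ((Finset.range (m+1) ×ˢ Finset.range (n+1)).filter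
        (fun p => ht D p.1 p.2 ≠ ht E p.1 p.2))
      (fun p => max (ht D p.1 p.2) (ht E p.1 p.2))
      ⟨p0, Finset.mem_filter.2 ⟨hp0g, hp0ne⟩⟩
    have hug := (Finset.mem_filter.1 huW).1
    have hune := (Finset.mem_filter.1 huW).2
    have hux : u.1 ≤ m := by
      have := (Finset.mem_product.1 hug).1
      simp only [Finset.mem_range] at this
      omega
    have huy : u.2 ≤ n := by
      have := (Finset.mem_product.1 hug).2
      simp only [Finset.mem_range] at this
      omega
    have hmax' : ∀ x' y' : ℕ, x' ≤ m → y' ≤ n → ht D x' y' ≠ ht E x' y' →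
        max (ht D x' y') (ht E x' y') ≤ max (ht D u.1 u.2) (ht E u.1 u.2) := by
      intro x' y' h1 h2 h3
      exact hmaxW (x', y') (Finset.mem_filter.2
        ⟨by simp only [Finset.mem_product, Finset.mem_range]; omega, h3⟩)
    rcases lt_or_gt_of_ne hune with hlt | hgt
    · -- flip on the E side
      have hmaxE : ∀ x' y' : ℕ, x' ≤ m → y' ≤ n → ht E x' y' ≠ ht D x' y' →
          ht E x' y' ≤ ht E u.1 u.2 ∧ ht D x' y' ≤ ht E u.1 u.2 := by
        intro x' y' h1 h2 h3
        have h4 := hmax' x' y' h1 h2 (Ne.symm h3)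
        rw [max_eq_right (le_of_lt hlt)] at h4
        exact ⟨le_trans (le_max_right _ _) h4, le_trans (le_max_left _ _) h4⟩
      obtain ⟨E', hFE, hE', hhE, hgapE⟩ := flipstep hE hD hux huy hlt hmaxE
      have hmu : mu m n D E' < k := by
        rw [← hk]
        unfold mu
        apply Finset.sum_lt_sum
        · intro p hp
          rw [hhE p.1 p.2]
          by_cases hpu : p.1 = u.1 ∧ p.2 = u.2
          · rw [if_pos hpu, hpu.1, hpu.2]
            have := hgapE
            omega
          · rw [if_neg hpu]
            omega
        · refine ⟨u, hug, ?_⟩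
          rw [hhE u.1 u.2, if_pos ⟨rfl, rfl⟩]
          have := hgapE
          omega
      have hrev : Flip E' E := flip_rev hE hFE
      exact Relation.ReflTransGen.tail (IH _ hmu D E' hD hE' rfl) hrev
    · -- flip on the D side
      have hmaxD : ∀ x' y' : ℕ, x' ≤ m → y' ≤ n → ht D x' y' ≠ ht E x' y' →
          ht D x' y' ≤ ht D u.1 u.2 ∧ ht E x' y' ≤ ht D u.1 u.2 := by
        intro x' y' h1 h2 h3
        have h4 := hmax' x' y' h1 h2 h3
        rw [max_eq_left (le_of_lt hgt)] at h4
        exact ⟨le_trans (le_max_left _ _) h4, le_trans (le_max_right _ _) h4⟩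
      obtain ⟨D', hFD, hD', hhD, hgapD⟩ := flipstep hD hE hux huy hgt hmaxD
      have hmu : mu m n D' E < k := by
        rw [← hk]
        unfold mu
        apply Finset.sum_lt_sum
        · intro p hp
          rw [hhD p.1 p.2]
          by_cases hpu : p.1 = u.1 ∧ p.2 = u.2
          · rw [if_pos hpu, hpu.1, hpu.2]
            have := hgapD
            omega
          · rw [if_neg hpu]
            omega
        · refine ⟨u, hug, ?_⟩
          rw [hhD u.1 u.2, if_pos ⟨rfl, rfl⟩]
          have := hgapD
          omega
      exact Relation.ReflTransGen.head hFD (IH _ hmu D' E hD' hE rfl)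

noncomputable def vtil (m c : ℕ) : Finset (Finset (ℤ×ℤ)) :=
  (Finset.Icc (1:ℤ) (m:ℤ) ×ˢ Finset.Icc (1:ℤ) (c:ℤ)).image
    (fun q => {(q.1, 2*q.2 - 1), (q.1, 2*q.2)})

lemma vtil_vert (m c : ℕ) : ∀ d ∈ vtil m c, Vert d := by
  intro d hd
  obtain ⟨q, _, rfl⟩ := Finset.mem_image.1 hd
  refine ⟨q.1, 2*q.2 - 1, ?_⟩
  norm_num

lemma vtil_tiling (m n c : ℕ) (hc : n = c + c) :
    IsTiling (rect (m:ℤ) (n:ℤ)) (vtil m c) := by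
  refine ⟨fun d hd => Or.inr (vtil_vert m c d hd), ?_, ?_⟩
  · intro d hd p hp
    obtain ⟨q, hq, rfl⟩ := Finset.mem_image.1 hd
    simp only [Finset.mem_product, Finset.mem_Icc] at hq
    simp only [Finset.mem_insert, Finset.mem_singleton] at hp
    rw [mem_rect]
    rcases hp with rfl | rfl <;> simp only <;> omega
  · rintro ⟨i, j⟩ hp
    rw [mem_rect] at hp
    simp only at hp
    obtain ⟨kk, hk1, hk2, hk3⟩ : ∃ kk : ℤ, 1 ≤ kk ∧ kk ≤ (c:ℤ) ∧ (j = 2*kk-1 ∨ j = 2*kk) :=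
      ⟨(j+1)/2, by omega⟩
    refine ⟨{(i, 2*kk-1), (i, 2*kk)}, ⟨?_, ?_⟩, ?_⟩
    · exact Finset.mem_image.2 ⟨(i, kk),
        by simp only [Finset.mem_product, Finset.mem_Icc]; omega, rfl⟩
    · simp only [Finset.mem_insert, Finset.mem_singleton, Prod.mk.injEq]
      rcases hk3 with h | h
      · exact Or.inl ⟨trivial, h⟩
      · exact Or.inr ⟨trivial, h⟩
    · rintro d' ⟨hd', hpd'⟩
      obtain ⟨⟨i', k'⟩, hq', rfl⟩ := Finset.mem_image.1 hd'
      simp only [Finset.mem_product, Finset.mem_Icc] at hq'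
      simp only [Finset.mem_insert, Finset.mem_singleton, Prod.mk.injEq] at hpd'
      have h1 : i' = i ∧ k' = kk := by omega
      rw [h1.1, h1.2]

end DominoAux

theorem stmt2 (m n : ℕ) (hm : 0 < m) (hn : 0 < n) (hne : Even n)
    (D : Finset (Finset (ℤ × ℤ))) (hD : IsTiling (rect (m : ℤ) (n : ℤ)) D) :
    ∃ D₀ : Finset (Finset (ℤ × ℤ)), IsTiling (rect (m : ℤ) (n : ℤ)) D₀ ∧
      (∀ d ∈ D₀, Vert d) ∧ Relation.ReflTransGen Flip D₀ D := by
  obtain ⟨c, hc⟩ := hne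
  refine ⟨DominoAux.vtil m c, DominoAux.vtil_tiling m n c hc, DominoAux.vtil_vert m c, ?_⟩
  exact DominoAux.conn (DominoAux.mu m n (DominoAux.vtil m c) D) (DominoAux.vtil m c) D
    (DominoAux.vtil_tiling m n c hc) hD rfl
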